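/- Let (P₀, Q₀) and (P₁, Q₁) be two pairs of orthogonal projections on H, each pair in generic position, with P₀ - Q₀ = P₁ - Q₁. If P₁ + Q₁ ≤ P₀ + Q₀ in the order of selfadjoint operators, then P₁ = P₀ and Q₁ = Q₀. -/

import Mathlib

open ContinuousLinearMap

variable {H : Type*} [NormedAddCommGroup H] [InnerProductSpace ℂ H] [CompleteSpace H]

/-- An orthogonal projection: a selfadjoint idempotent bounded operator. -/
def IsOrthogonalProjection (P : H →L[ℂ] H) : Prop :=
  IsSelfAdjoint P ∧ P * P = P

/-- A symmetry: a selfadjoint unitary operator. -/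
def IsSymmetry (V : H →L[ℂ] H) : Prop :=
  IsSelfAdjoint V ∧ V * V = 1

/-- Two orthogonal projections are in generic position if the four canonical
intersections of their ranges and kernels are trivial. -/
def GenericPosition (P Q : H →L[ℂ] H) : Prop :=
  LinearMap.range (P : H →ₗ[ℂ] H) ⊓ LinearMap.range (Q : H →ₗ[ℂ] H) = ⊥ ∧
  LinearMap.range (P : H →ₗ[ℂ] H) ⊓ LinearMap.ker (Q : H →ₗ[ℂ] H) = ⊥ ∧
  LinearMap.ker (P : H →ₗ[ℂ] H) ⊓ LinearMap.range (Q : H →ₗ[ℂ] H) = ⊥ ∧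
  LinearMap.ker (P : H →ₗ[ℂ] H) ⊓ LinearMap.ker (Q : H →ₗ[ℂ] H) = ⊥

/-- Anything commuting with `a` commutes with `cfc f a`. -/
lemma aux_cfc_comm (a b : H →L[ℂ] H) (ha : IsSelfAdjoint a)
    (hab : a * b = b * a) (f : ℝ → ℝ) : cfc f a * b = b * cfc f a := by
  by_cases hf : ContinuousOn f (spectrum ℝ a)
  · have key : ∀ g : C(spectrum ℝ a, ℝ), cfcHom ha g * b = b * cfcHom ha g := by
      intro g
      let S : Subalgebra ℝ C(spectrum ℝ a, ℝ) :=
        (Subalgebra.centralizer ℝ {b}).comap (cfcHom ha (R := ℝ)).toAlgHom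
      have hSc : IsClosed (S : Set C(spectrum ℝ a, ℝ)) := by
        have hset : (S : Set C(spectrum ℝ a, ℝ)) =
            (fun g => b * cfcHom ha g - cfcHom ha g * b) ⁻¹' {0} := by
          ext g
          simp only [SetLike.mem_coe, Subalgebra.mem_comap, Subalgebra.mem_centralizer_iff,
            Set.mem_preimage, Set.mem_singleton_iff, sub_eq_zero, S]
          constructor
          · intro h; exact (h b rfl)
          · rintro h c rfl; exact h
        rw [hset]
        have hc : Continuous (cfcHom ha (R := ℝ) : C(spectrum ℝ a, ℝ) → H →L[ℂ] H) :=
          (cfcHom_isClosedEmbedding ha).continuous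
        exact isClosed_singleton.preimage <| ((continuous_const.mul hc).sub (hc.mul continuous_const))
      have hX : polynomialFunctions (spectrum ℝ a) ≤ S := by
        rw [polynomialFunctions.eq_adjoin_X]
        apply Algebra.adjoin_le
        rintro x hx
        rw [Set.mem_singleton_iff] at hx
        subst hx
        simp only [Subalgebra.mem_comap, Subalgebra.mem_centralizer_iff, S]
        rintro c rfl
        show c * cfcHom ha _ = cfcHom ha _ * c
        rw [Polynomial.toContinuousMapOnAlgHom_apply,
          Polynomial.toContinuousMapOn_X_eq_restrict_id, cfcHom_id ha]
        exact hab.symm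
      have htop : (⊤ : Subalgebra ℝ C(spectrum ℝ a, ℝ)) ≤ S := by
        rw [← polynomialFunctions.topologicalClosure (spectrum ℝ a)]
        exact Subalgebra.topologicalClosure_minimal hX hSc
      have hg := htop (show g ∈ (⊤ : Subalgebra ℝ _) from trivial)
      simp only [Subalgebra.mem_comap, Subalgebra.mem_centralizer_iff, S] at hg
      exact (hg b rfl).symm
    rw [cfc_apply f a ha hf]
    exact key _
  · rw [cfc_apply_of_not_continuousOn a hf]
    simp

/-- A square root of a nonneg operator commuting with everything `t` commutes with. -/
lemma aux_sqrt (t : H →L[ℂ] H) (ht : 0 ≤ t) :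
    ∃ r : H →L[ℂ] H, 0 ≤ r ∧ r * r = t ∧ ∀ b, t * b = b * t → r * b = b * r := by
  have hsa : IsSelfAdjoint t := .of_nonneg ht
  have hspec : ∀ x ∈ spectrum ℝ t, 0 ≤ x :=
    (StarOrderedRing.nonneg_iff_spectrum_nonneg t).mp ht
  refine ⟨cfc Real.sqrt t, cfc_nonneg fun x _ => Real.sqrt_nonneg x, ?_, fun b hb =>
    aux_cfc_comm t b hsa hb _⟩
  rw [← cfc_mul Real.sqrt Real.sqrt t]
  calc cfc (fun x => Real.sqrt x * Real.sqrt x) t = cfc (id : ℝ → ℝ) t := by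
        apply cfc_congr
        intro x hx
        simpa using Real.mul_self_sqrt (hspec x hx)
    _ = t := cfc_id ℝ t

/-- Product of commuting nonneg operators is nonneg. -/
lemma aux_mul_nonneg (t c : H →L[ℂ] H) (ht : 0 ≤ t) (hc : 0 ≤ c)
    (h : t * c = c * t) : 0 ≤ t * c := by
  obtain ⟨r, hr, hrr, hcomm⟩ := aux_sqrt t ht
  have hrsa : IsSelfAdjoint r := .of_nonneg hr
  have hrc := hcomm c h
  have : t * c = star r * c * r := by
    rw [hrsa.star_eq, mul_assoc, ← hrc, ← mul_assoc, hrr]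
  rw [this]
  exact star_left_conjugate_nonneg hc r

/-- A nonneg operator anticommuting with a selfadjoint operator annihilates it. -/
lemma aux_anticomm (t b : H →L[ℂ] H) (ht : 0 ≤ t) (hb : IsSelfAdjoint b)
    (h : t * b + b * t = 0) : t * b = 0 ∧ b * t = 0 := by
  have htb : t * b = -(b * t) := eq_neg_of_add_eq_zero_left h
  have hbt : b * t = -(t * b) := eq_neg_of_add_eq_zero_right h
  have hc : t * (b * b) = (b * b) * t := by
    calc t * (b * b) = (t * b) * b := (mul_assoc _ _ _).symm
      _ = -(b * t) * b := by rw [htb]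
      _ = -(b * (t * b)) := by rw [neg_mul, mul_assoc]
      _ = -(b * -(b * t)) := congrArg (fun z => -(b * z)) htb
      _ = (b * b) * t := by rw [mul_neg, neg_neg, mul_assoc]
  have h1 : 0 ≤ b * t * b := by
    have := star_left_conjugate_nonneg ht b
    rwa [hb.star_eq] at this
  have h2 : b * t * b = -(t * (b * b)) := by
    rw [hbt, neg_mul, mul_assoc]
  have hbb : 0 ≤ b * b := by
    have := star_mul_self_nonneg b
    rwa [hb.star_eq] at this
  have h3 : 0 ≤ t * (b * b) := aux_mul_nonneg t (b * b) ht hbb hc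
  have h4 : t * (b * b) = 0 := by
    refine le_antisymm ?_ h3
    rw [h2] at h1
    exact neg_nonneg.mp h1
  obtain ⟨r, hr, hrr, hcomm⟩ := aux_sqrt t ht
  have h5 : b * t * b = 0 := by rw [h2, h4, neg_zero]
  have h6 : star (r * b) * (r * b) = 0 := by
    rw [star_mul, hb.star_eq, (IsSelfAdjoint.of_nonneg hr).star_eq]
    have hiden : (b * r) * (r * b) = b * t * b := by rw [← hrr]; noncomm_ring
    rw [hiden, h5]
  have h7 : r * b = 0 := CStarRing.star_mul_self_eq_zero_iff _ |>.mp h6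
  have h8 : t * b = 0 := by rw [← hrr, mul_assoc, h7, mul_zero]
  exact ⟨h8, by rw [hbt, h8, neg_zero]⟩

lemma aux_core (d s₀ s₁ : H →L[ℂ] H)
    (hsd : IsSelfAdjoint d) (hss : IsSelfAdjoint (s₀ + s₁))
    (h1 : s₀ * d + d * s₀ = 0) (h2 : s₁ * d + d * s₁ = 0)
    (h3 : s₀ * s₀ = 1 - d * d) (h4 : s₁ * s₁ = 1 - d * d)
    (ht : 0 ≤ s₀ - s₁) :
    s₀ * (s₀ - s₁) = s₀ - s₁ := by
  have half : ∀ x : H →L[ℂ] H, x + x = 0 → x = 0 := by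
    intro x hx
    have h2 : (2:ℂ) • x = (2:ℂ) • (0 : H →L[ℂ] H) := by
      rw [two_smul, smul_zero]; exact hx
    exact smul_right_injective _ two_ne_zero h2
  set t := s₀ - s₁ with htdef
  -- t anticommutes with d
  have h5 : t * d + d * t = 0 := by
    have e : t * d + d * t = (s₀ * d + d * s₀) - (s₁ * d + d * s₁) := by
      rw [htdef]; noncomm_ring
    rw [e, h1, h2, sub_zero]
  obtain ⟨htd, hdt⟩ := aux_anticomm t d ht hsd h5
  -- t anticommutes with s₀ + s₁
  have h6 : t * (s₀ + s₁) + (s₀ + s₁) * t = 0 := by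
    have e : t * (s₀ + s₁) + (s₀ + s₁) * t = (s₀ * s₀ + s₀ * s₀) - (s₁ * s₁ + s₁ * s₁) := by
      rw [htdef]; noncomm_ring
    rw [e, h3, h4]; abel
  obtain ⟨htm, hmt⟩ := aux_anticomm t (s₀ + s₁) ht hss h6
  -- key multiplication identities
  have hA : t * t = t * s₀ + t * s₀ := by
    have e : t * t = t * s₀ + t * s₀ - t * (s₀ + s₁) := by rw [htdef]; noncomm_ring
    rw [e, htm, sub_zero]
  have hB : t * t = s₀ * t + s₀ * t := by
    have e : t * t = s₀ * t + s₀ * t - (s₀ + s₁) * t := by rw [htdef]; noncomm_ring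
    rw [e, hmt, sub_zero]
  have hC : t * (s₀ * s₀) = t := by
    rw [h3]
    have e : t * (1 - d * d) = t - (t * d) * d := by noncomm_ring
    rw [e, htd, zero_mul, sub_zero]
  have hD : (t * t) * s₀ = t + t := by
    calc (t * t) * s₀ = (t * s₀ + t * s₀) * s₀ := by rw [← hA]
      _ = t * (s₀ * s₀) + t * (s₀ * s₀) := by noncomm_ring
      _ = t + t := by rw [hC]
  have hE : t * (t * t) = (t + t) + (t + t) := by
    calc t * (t * t) = t * (t * s₀ + t * s₀) := by rw [← hA]
      _ = (t * t) * s₀ + (t * t) * s₀ := by noncomm_ring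
      _ = (t + t) + (t + t) := by rw [hD]
  -- u := t*t - 2t is zero
  set u := t * t - (t + t) with hu
  have hF : u * t = -(u + u) := by
    have e : u * t + (u + u) = t * (t * t) - ((t + t) + (t + t)) := by
      rw [hu]; noncomm_ring
    rw [hE, sub_self] at e
    exact eq_neg_of_add_eq_zero_left e
  have hsat : IsSelfAdjoint t := .of_nonneg ht
  have hsau : IsSelfAdjoint u := by
    rw [hu]
    show star _ = _
    rw [star_sub, star_mul, hsat.star_eq, star_add, hsat.star_eq]
  have hu2 : 0 ≤ u * u := by
    have := star_mul_self_nonneg u; rwa [hsau.star_eq] at this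
  have hutu : 0 ≤ u * t * u := by
    have := star_left_conjugate_nonneg ht u; rwa [hsau.star_eq] at this
  have hutu' : u * t * u = -(u * u + u * u) := by
    calc u * t * u = (-(u + u)) * u := by rw [hF]
      _ = -(u * u + u * u) := by noncomm_ring
  have huu0 : u * u + u * u = 0 := by
    refine le_antisymm ?_ (add_nonneg hu2 hu2)
    rw [hutu'] at hutu
    exact neg_nonneg.mp hutu
  have huu : u * u = 0 := half _ huu0
  have hu0 : u = 0 := by
    have hn : ‖u‖ * ‖u‖ = 0 := by
      rw [← CStarRing.norm_star_mul_self (x := u), hsau.star_eq, huu, norm_zero]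
    exact norm_eq_zero.mp (mul_self_eq_zero.mp hn)
  have htt : t * t = t + t := by
    have := hu0; rw [hu] at this; exact sub_eq_zero.mp this
  -- conclude s₀ * t = t
  have e : (s₀ * t - t) + (s₀ * t - t) = (s₀ * t + s₀ * t) - (t + t) := by abel
  rw [← hB, htt, sub_self] at e
  exact sub_eq_zero.mp (half _ e)

lemma aux_proj_inner (R : H →L[ℂ] H) (hsa : IsSelfAdjoint R) (hid : R * R = R) (z : H) :
    inner ℂ (z - R z) z = (inner ℂ (z - R z) (z - R z) : ℂ) := by
  have hw : R (z - R z) = 0 := by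
    have : R (R z) = R z := by
      have := congrArg (fun f : H →L[ℂ] H => f z) hid
      simpa [mul_apply] using this
    simp [map_sub, this]
  have hz : z = (z - R z) + R z := by abel
  have horth : (inner ℂ (z - R z) (R z) : ℂ) = 0 := by
    have hadj : ContinuousLinearMap.adjoint R = R := isSelfAdjoint_iff'.mp hsa
    calc (inner ℂ (z - R z) (R z) : ℂ) = inner ℂ (z - R z) ((ContinuousLinearMap.adjoint R) z) := by
          rw [hadj]
      _ = inner ℂ (R (z - R z)) z := ContinuousLinearMap.adjoint_inner_right _ _ _
      _ = 0 := by rw [hw, inner_zero_left]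
  have hstep : (inner ℂ (z - R z) z : ℂ) = inner ℂ (z - R z) ((z - R z) + R z) := by
    rw [← hz]
  rw [hstep, inner_add_right, horth, add_zero]

/-- Two pairs of projections in generic position with the same difference are
not strictly comparable: if `P₁ + Q₁ ≤ P₀ + Q₀` (i.e. `(P₀ + Q₀) - (P₁ + Q₁)` is positive),
then the pairs coincide. -/
theorem generic_pairs_not_comparable (P₀ Q₀ P₁ Q₁ : H →L[ℂ] H)
    (hP₀ : IsOrthogonalProjection P₀) (hQ₀ : IsOrthogonalProjection Q₀)
    (hP₁ : IsOrthogonalProjection P₁) (hQ₁ : IsOrthogonalProjection Q₁)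
    (hgen₀ : GenericPosition P₀ Q₀) (hgen₁ : GenericPosition P₁ Q₁)
    (hdiff : P₀ - Q₀ = P₁ - Q₁)
    (hle : ((P₀ + Q₀) - (P₁ + Q₁)).IsPositive) :
    P₁ = P₀ ∧ Q₁ = Q₀ := by
  obtain ⟨hsaP₀, hiP₀⟩ := hP₀
  obtain ⟨hsaQ₀, hiQ₀⟩ := hQ₀
  obtain ⟨hsaP₁, hiP₁⟩ := hP₁
  obtain ⟨hsaQ₁, hiQ₁⟩ := hQ₁
  have hsas₀ : IsSelfAdjoint (P₀ + Q₀ - 1 : H →L[ℂ] H) :=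
    (hsaP₀.add hsaQ₀).sub (IsSelfAdjoint.one (R := H →L[ℂ] H))
  have hsas₁ : IsSelfAdjoint (P₁ + Q₁ - 1 : H →L[ℂ] H) :=
    (hsaP₁.add hsaQ₁).sub (IsSelfAdjoint.one (R := H →L[ℂ] H))
  have hsad : IsSelfAdjoint (P₀ - Q₀) := hsaP₀.sub hsaQ₀
  have h1 : (P₀ + Q₀ - 1) * (P₀ - Q₀) + (P₀ - Q₀) * (P₀ + Q₀ - 1) = 0 := by
    have e : (P₀ + Q₀ - 1) * (P₀ - Q₀) + (P₀ - Q₀) * (P₀ + Q₀ - 1)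
        = (P₀ * P₀ + P₀ * P₀ - P₀ - P₀) - (Q₀ * Q₀ + Q₀ * Q₀ - Q₀ - Q₀) := by noncomm_ring
    rw [e, hiP₀, hiQ₀]; abel
  have h2 : (P₁ + Q₁ - 1) * (P₀ - Q₀) + (P₀ - Q₀) * (P₁ + Q₁ - 1) = 0 := by
    rw [hdiff]
    have e : (P₁ + Q₁ - 1) * (P₁ - Q₁) + (P₁ - Q₁) * (P₁ + Q₁ - 1)
        = (P₁ * P₁ + P₁ * P₁ - P₁ - P₁) - (Q₁ * Q₁ + Q₁ * Q₁ - Q₁ - Q₁) := by noncomm_ring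
    rw [e, hiP₁, hiQ₁]; abel
  have h3 : (P₀ + Q₀ - 1) * (P₀ + Q₀ - 1) = 1 - (P₀ - Q₀) * (P₀ - Q₀) := by
    have e : (P₀ + Q₀ - 1) * (P₀ + Q₀ - 1) + (P₀ - Q₀) * (P₀ - Q₀)
        = (P₀ * P₀ + P₀ * P₀ - P₀ - P₀) + (Q₀ * Q₀ + Q₀ * Q₀ - Q₀ - Q₀) + 1 := by noncomm_ring
    have e2 : (P₀ + Q₀ - 1) * (P₀ + Q₀ - 1) + (P₀ - Q₀) * (P₀ - Q₀) = 1 := by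
      rw [e, hiP₀, hiQ₀]; abel
    exact eq_sub_of_add_eq e2
  have h4 : (P₁ + Q₁ - 1) * (P₁ + Q₁ - 1) = 1 - (P₀ - Q₀) * (P₀ - Q₀) := by
    rw [hdiff]
    have e : (P₁ + Q₁ - 1) * (P₁ + Q₁ - 1) + (P₁ - Q₁) * (P₁ - Q₁)
        = (P₁ * P₁ + P₁ * P₁ - P₁ - P₁) + (Q₁ * Q₁ + Q₁ * Q₁ - Q₁ - Q₁) + 1 := by noncomm_ring
    have e2 : (P₁ + Q₁ - 1) * (P₁ + Q₁ - 1) + (P₁ - Q₁) * (P₁ - Q₁) = 1 := by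
      rw [e, hiP₁, hiQ₁]; abel
    exact eq_sub_of_add_eq e2
  have heq : (P₀ + Q₀ - 1) - (P₁ + Q₁ - 1) = (P₀ + Q₀) - (P₁ + Q₁) := by abel
  have ht : (0 : H →L[ℂ] H) ≤ (P₀ + Q₀ - 1) - (P₁ + Q₁ - 1) := by
    rw [heq]; exact (nonneg_iff_isPositive _).mpr hle
  have hkey := aux_core (P₀ - Q₀) (P₀ + Q₀ - 1) (P₁ + Q₁ - 1) hsad (hsas₀.add hsas₁)
    h1 h2 h3 h4 ht
  rw [heq] at hkey
  have htzero : (P₀ + Q₀) - (P₁ + Q₁) = (0 : H →L[ℂ] H) := by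
    ext x
    have hy : (P₀ + Q₀ - 1) (((P₀ + Q₀) - (P₁ + Q₁)) x) = ((P₀ + Q₀) - (P₁ + Q₁)) x := by
      have := congrArg (fun f : H →L[ℂ] H => f x) hkey
      simpa [mul_apply] using this
    set y := ((P₀ + Q₀) - (P₁ + Q₁)) x with hydef
    have hsum : P₀ y + Q₀ y = y + y := by
      have h' : P₀ y + Q₀ y - y = y := by
        simpa [sub_apply, add_apply, one_apply] using hy
      exact sub_eq_iff_eq_add.mp h'
    have hinnersum : (inner ℂ (y - P₀ y) (y - P₀ y) : ℂ) + inner ℂ (y - Q₀ y) (y - Q₀ y) = 0 := by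
      rw [← aux_proj_inner P₀ hsaP₀ hiP₀ y, ← aux_proj_inner Q₀ hsaQ₀ hiQ₀ y,
        ← inner_add_left]
      have hzero : (y - P₀ y) + (y - Q₀ y) = 0 := by
        have e : (y - P₀ y) + (y - Q₀ y) = y + y - (P₀ y + Q₀ y) := by abel
        rw [e, hsum, sub_self]
      rw [hzero, inner_zero_left]
    have hnorm : ‖y - P₀ y‖ ^ 2 + ‖y - Q₀ y‖ ^ 2 = 0 := by
      have hre : RCLike.re ((inner ℂ (y - P₀ y) (y - P₀ y) : ℂ) + inner ℂ (y - Q₀ y) (y - Q₀ y))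
          = RCLike.re (0 : ℂ) := by rw [hinnersum]
      rwa [map_add, inner_self_eq_norm_sq, inner_self_eq_norm_sq, map_zero] at hre
    have ha0 : y - P₀ y = 0 := by
      have h1' : ‖y - P₀ y‖ = 0 := by
        nlinarith [sq_nonneg ‖y - P₀ y‖, sq_nonneg ‖y - Q₀ y‖]
      exact norm_eq_zero.mp h1'
    have hb0 : y - Q₀ y = 0 := by
      have h1' : ‖y - Q₀ y‖ = 0 := by
        nlinarith [sq_nonneg ‖y - P₀ y‖, sq_nonneg ‖y - Q₀ y‖]
      exact norm_eq_zero.mp h1'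
    have hPy : P₀ y = y := (sub_eq_zero.mp ha0).symm
    have hQy : Q₀ y = y := (sub_eq_zero.mp hb0).symm
    have hmem : y ∈ (LinearMap.range (P₀ : H →ₗ[ℂ] H) ⊓ LinearMap.range (Q₀ : H →ₗ[ℂ] H) : Submodule ℂ H) :=
      Submodule.mem_inf.mpr ⟨LinearMap.mem_range.mpr ⟨y, hPy⟩, LinearMap.mem_range.mpr ⟨y, hQy⟩⟩
    rw [hgen₀.1] at hmem
    have hy0 : y = 0 := Submodule.mem_bot ℂ |>.mp hmem
    simpa [hydef] using hy0
  have hsum : P₀ + Q₀ = P₁ + Q₁ := sub_eq_zero.mp htzero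
  constructor
  · have h2' : P₀ + P₀ = P₁ + P₁ := by
      calc P₀ + P₀ = (P₀ + Q₀) + (P₀ - Q₀) := by abel
        _ = (P₁ + Q₁) + (P₁ - Q₁) := by rw [hsum, hdiff]
        _ = P₁ + P₁ := by abel
    have hs2 : (2 : ℂ) • P₁ = (2 : ℂ) • P₀ := by
      rw [two_smul, two_smul]; exact h2'.symm
    exact smul_right_injective _ two_ne_zero hs2
  · have h2' : Q₀ + Q₀ = Q₁ + Q₁ := by
      calc Q₀ + Q₀ = (P₀ + Q₀) - (P₀ - Q₀) := by abel
        _ = (P₁ + Q₁) - (P₁ - Q₁) := by rw [hsum, hdiff]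
        _ = Q₁ + Q₁ := by abel
    have hs2 : (2 : ℂ) • Q₁ = (2 : ℂ) • Q₀ := by
      rw [two_smul, two_smul]; exact h2'.symm
    exact smul_right_injective _ two_ne_zero hs2
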